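/- For each integer k ≥ 0 let β_k = 3((k+3)^{1/3} − (k+2)^{1/3}), and define Γ_0 = 1 and Γ_k = ∏_{i=0}^{k−1}(1−β_i)² for k ≥ 1. Then for all integers K ≥ 1 and 0 ≤ k ≤ K−1, ∑_{j=k+1}^{K−1} Γ_j/Γ_k ≤ (1/2)(k+2)^{2/3} + (1/6)(k+2)^{1/3} + 1/36. -/

import Mathlib

open Real Finset

-- cube root derivative
lemma cube_deriv {x : ℝ} (hx : 0 < x) :
    HasDerivAt (fun y : ℝ => y ^ ((1:ℝ)/3)) ((1/3) * x ^ (-(2:ℝ)/3)) x := by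
  have := Real.hasDerivAt_rpow_const (x := x) (p := (1:ℝ)/3) (Or.inl hx.ne')
  convert this using 2
  norm_num

-- β_i written via MVT
lemma beta_mvt (a : ℝ) (ha : 0 < a) :
    ∃ c ∈ Set.Ioo a (a+1),
      (a+1) ^ ((1:ℝ)/3) - a ^ ((1:ℝ)/3) = (1/3) * c ^ (-(2:ℝ)/3) := by
  have hlt : a < a + 1 := by linarith
  have hcont : ContinuousOn (fun y : ℝ => y ^ ((1:ℝ)/3)) (Set.Icc a (a+1)) := by
    intro y hy
    exact (cube_deriv (lt_of_lt_of_le ha hy.1)).continuousAt.continuousWithinAt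
  have hd : ∀ y ∈ Set.Ioo a (a+1), HasDerivAt (fun y : ℝ => y ^ ((1:ℝ)/3))
      ((1/3) * y ^ (-(2:ℝ)/3)) y := fun y hy => cube_deriv (ha.trans hy.1)
  obtain ⟨c, hc, hceq⟩ := exists_hasDerivAt_eq_slope _ _ hlt hcont hd
  refine ⟨c, hc, ?_⟩
  rw [hceq]
  field_simp
  ring

lemma beta_pos_lt_one (i : ℕ) :
    0 < 3 * (((i:ℝ) + 3)^((1:ℝ)/3) - ((i:ℝ) + 2)^((1:ℝ)/3)) ∧
    3 * (((i:ℝ) + 3)^((1:ℝ)/3) - ((i:ℝ) + 2)^((1:ℝ)/3)) < 1 := by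
  have ha : (0:ℝ) < (i:ℝ) + 2 := by positivity
  obtain ⟨c, hc, hceq⟩ := beta_mvt ((i:ℝ)+2) ha
  have h3 : ((i:ℝ) + 2) + 1 = (i:ℝ) + 3 := by ring
  rw [h3] at hceq
  have hc1 : (1:ℝ) < c := by
    have h0 : (0:ℝ) ≤ (i:ℝ) := Nat.cast_nonneg i
    linarith [hc.1]
  constructor
  · rw [hceq]
    have : (0:ℝ) < c ^ (-(2:ℝ)/3) := Real.rpow_pos_of_pos (by linarith) _
    linarith
  · rw [hceq]
    have : c ^ (-(2:ℝ)/3) < 1 :=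
      Real.rpow_lt_one_of_one_lt_of_neg hc1 (by norm_num)
    linarith

-- the majorant
noncomputable def gmaj (x : ℝ) : ℝ :=
  Real.exp (-6 * x ^ ((1:ℝ)/3)) * (x ^ ((2:ℝ)/3)/2 + x ^ ((1:ℝ)/3)/6 + 1/36)

lemma gmaj_deriv {x : ℝ} (hx : 0 < x) :
    HasDerivAt gmaj (-(Real.exp (-6 * x ^ ((1:ℝ)/3)))) x := by
  have h13 := cube_deriv hx
  have h23 : HasDerivAt (fun y : ℝ => y ^ ((2:ℝ)/3)) ((2/3) * x ^ (-(1:ℝ)/3)) x := by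
    have := Real.hasDerivAt_rpow_const (x := x) (p := (2:ℝ)/3) (Or.inl hx.ne')
    convert this using 2
    norm_num
  have he : HasDerivAt (fun y : ℝ => Real.exp (-6 * y ^ ((1:ℝ)/3)))
      ((-6 * ((1/3) * x ^ (-(2:ℝ)/3))) * Real.exp (-6 * x ^ ((1:ℝ)/3))) x := by
    have := (h13.const_mul (-6 : ℝ)).exp
    convert this using 1
    ring
  have hq : HasDerivAt (fun y : ℝ => y ^ ((2:ℝ)/3)/2 + y ^ ((1:ℝ)/3)/6 + 1/36)
      ((2/3) * x ^ (-(1:ℝ)/3)/2 + (1/3) * x ^ (-(2:ℝ)/3)/6) x := by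
    have h13' := Real.hasDerivAt_rpow_const (x := x) (p := (1:ℝ)/3) (Or.inl hx.ne')
    have : HasDerivAt (fun y : ℝ => y ^ ((1:ℝ)/3)) ((1/3) * x ^ (-(2:ℝ)/3)) x := h13
    exact ((h23.div_const 2).add (this.div_const 6)).add_const (1/36)
  have hmul := he.mul hq
  have : HasDerivAt gmaj
      ((-6 * ((1/3) * x ^ (-(2:ℝ)/3))) * Real.exp (-6 * x ^ ((1:ℝ)/3)) *
        (x ^ ((2:ℝ)/3)/2 + x ^ ((1:ℝ)/3)/6 + 1/36) +
       Real.exp (-6 * x ^ ((1:ℝ)/3)) *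
        ((2/3) * x ^ (-(1:ℝ)/3)/2 + (1/3) * x ^ (-(2:ℝ)/3)/6)) x := hmul
  convert this using 1
  -- algebra
  set u := x ^ ((1:ℝ)/3) with hu
  have hupos : 0 < u := Real.rpow_pos_of_pos hx _
  have h2 : x ^ ((2:ℝ)/3) = u ^ 2 := by
    rw [hu, ← Real.rpow_natCast (x ^ ((1:ℝ)/3)) 2, ← Real.rpow_mul hx.le]
    norm_num
  have hm1 : x ^ (-(1:ℝ)/3) = u⁻¹ := by
    rw [hu, ← Real.rpow_neg_one (x ^ ((1:ℝ)/3)), ← Real.rpow_mul hx.le]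
    norm_num
  have hm2 : x ^ (-(2:ℝ)/3) = (u ^ 2)⁻¹ := by
    rw [← h2, ← Real.rpow_neg_one (x ^ ((2:ℝ)/3)), ← Real.rpow_mul hx.le]
    norm_num
  rw [h2, hm1, hm2]
  field_simp
  ring

lemma gmaj_nonneg {x : ℝ} (hx : 0 ≤ x) : 0 ≤ gmaj x := by
  unfold gmaj
  have h1 : (0:ℝ) ≤ x ^ ((2:ℝ)/3) := Real.rpow_nonneg hx _
  have h2 : (0:ℝ) ≤ x ^ ((1:ℝ)/3) := Real.rpow_nonneg hx _
  positivity

-- per-term bound via MVT on gmaj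
lemma gmaj_step {y : ℝ} (hy : 0 < y) :
    Real.exp (-6 * (y+1) ^ ((1:ℝ)/3)) ≤ gmaj y - gmaj (y+1) := by
  have hlt : y < y + 1 := by linarith
  have hcont : ContinuousOn gmaj (Set.Icc y (y+1)) := fun z hz =>
    (gmaj_deriv (lt_of_lt_of_le hy hz.1)).continuousAt.continuousWithinAt
  have hd : ∀ z ∈ Set.Ioo y (y+1), HasDerivAt gmaj (-(Real.exp (-6 * z ^ ((1:ℝ)/3)))) z :=
    fun z hz => gmaj_deriv (hy.trans hz.1)
  obtain ⟨c, hc, hceq⟩ := exists_hasDerivAt_eq_slope _ _ hlt hcont hd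
  have hden : (y + 1 - y : ℝ) = 1 := by ring
  rw [hden, div_one] at hceq
  have hmono : Real.exp (-6 * (y+1) ^ ((1:ℝ)/3)) ≤ Real.exp (-6 * c ^ ((1:ℝ)/3)) := by
    apply Real.exp_le_exp.mpr
    have : c ^ ((1:ℝ)/3) ≤ (y+1) ^ ((1:ℝ)/3) :=
      Real.rpow_le_rpow (by linarith [hc.1]) hc.2.le (by norm_num)
    nlinarith
  linarith [hceq, hmono]

theorem pstorm_gamma_ratio_sum_bound (β Γ : ℕ → ℝ)
    (hβ : ∀ k : ℕ, β k = 3 * (((k:ℝ) + 3)^((1:ℝ)/3) - ((k:ℝ) + 2)^((1:ℝ)/3)))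
    (hΓ : ∀ k : ℕ, Γ k = ∏ i ∈ Finset.range k, (1 - β i)^2) :
    ∀ (K : ℕ), 1 ≤ K → ∀ k : ℕ, k ≤ K - 1 →
      ∑ j ∈ Finset.Ico (k+1) K, Γ j / Γ k
        ≤ (1/2) * ((k:ℝ) + 2)^((2:ℝ)/3) + (1/6) * ((k:ℝ) + 2)^((1:ℝ)/3) + 1/36 := by
  intro K hK k hk
  have hkK : k + 1 ≤ K := by omega
  have hβ01 : ∀ i : ℕ, 0 < β i ∧ β i < 1 := by
    intro i; rw [hβ]; exact beta_pos_lt_one i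
  have hΓpos : ∀ m : ℕ, 0 < Γ m := by
    intro m
    rw [hΓ]
    apply Finset.prod_pos
    intro i _
    have h := (hβ01 i).2
    have : (0:ℝ) < 1 - β i := by linarith
    positivity
  -- telescoping sum of β over Ico
  have hsumβ : ∀ j : ℕ, k ≤ j → ∑ i ∈ Finset.Ico k j, β i
      = 3 * (((j:ℝ)+2) ^ ((1:ℝ)/3) - ((k:ℝ)+2) ^ ((1:ℝ)/3)) := by
    intro j hj
    induction j with
    | zero =>
      have : k = 0 := Nat.le_zero.mp hj
      subst this; simp
    | succ n ih =>
      rcases Nat.lt_or_ge k (n+1) with h | h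
      · have hkn : k ≤ n := Nat.lt_succ_iff.mp h
        rw [Finset.sum_Ico_succ_top hkn, ih hkn, hβ]
        push_cast
        ring
      · have : k = n + 1 := le_antisymm hj h
        subst this
        simp
  -- ratio bound
  have hratio : ∀ j : ℕ, k ≤ j →
      Γ j / Γ k ≤ Real.exp (6 * ((k:ℝ)+2) ^ ((1:ℝ)/3)) *
        Real.exp (-6 * ((j:ℝ)+2) ^ ((1:ℝ)/3)) := by
    intro j hj
    have hprod : Γ j / Γ k = ∏ i ∈ Finset.Ico k j, (1 - β i)^2 := by
      rw [hΓ, hΓ]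
      rw [eq_comm, eq_div_iff (ne_of_gt (by
        apply Finset.prod_pos; intro i _
        have h := (hβ01 i).2
        have : (0:ℝ) < 1 - β i := by linarith
        positivity))]
      rw [mul_comm]
      exact Finset.prod_range_mul_prod_Ico _ hj
    rw [hprod]
    have hle : ∏ i ∈ Finset.Ico k j, (1 - β i)^2
        ≤ ∏ i ∈ Finset.Ico k j, Real.exp (-(2 * β i)) := by
      apply Finset.prod_le_prod
      · intro i _; positivity
      · intro i _
        have h1 : 1 - β i ≤ Real.exp (-(β i)) := by
          have := Real.add_one_le_exp (-(β i)); linarith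
        have h0 : 0 ≤ 1 - β i := by linarith [(hβ01 i).2]
        have h2 : (1 - β i)^2 ≤ (Real.exp (-(β i)))^2 := by nlinarith
        calc (1 - β i)^2 ≤ (Real.exp (-(β i)))^2 := h2
          _ = Real.exp (-(β i)) * Real.exp (-(β i)) := sq _
          _ = Real.exp (-(2 * β i)) := by rw [← Real.exp_add]; ring_nf
    refine hle.trans ?_
    rw [← Real.exp_sum, ← Real.exp_add]
    apply Real.exp_le_exp.mpr
    have hsum : ∑ i ∈ Finset.Ico k j, -(2 * β i) = -2 * ∑ i ∈ Finset.Ico k j, β i := by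
      rw [Finset.mul_sum]
      apply Finset.sum_congr rfl
      intro i _; ring
    rw [hsum, hsumβ j hj]
    ring_nf
    exact le_refl _
  -- telescoping of gmaj
  have htel : ∀ n : ℕ, k + 1 ≤ n →
      ∑ j ∈ Finset.Ico (k+1) n, (gmaj ((j:ℝ)+1) - gmaj ((j:ℝ)+2))
        = gmaj ((k:ℝ)+2) - gmaj ((n:ℝ)+1) := by
    intro n hn
    induction n with
    | zero => omega
    | succ m ih =>
      rcases Nat.lt_or_ge (k+1) (m+1) with h | h
      · have hkm : k + 1 ≤ m := Nat.lt_succ_iff.mp h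
        rw [Finset.sum_Ico_succ_top hkm, ih hkm]
        push_cast
        ring_nf
      · have : k + 1 = m + 1 := le_antisymm hn h
        rw [← this]
        have : ((k:ℝ) + 1 + 1) = (k:ℝ) + 2 := by ring
        simp [this]
  set a := ((k:ℝ)+2) ^ ((1:ℝ)/3) with ha
  calc ∑ j ∈ Finset.Ico (k+1) K, Γ j / Γ k
      ≤ ∑ j ∈ Finset.Ico (k+1) K,
          Real.exp (6 * a) * Real.exp (-6 * ((j:ℝ)+2) ^ ((1:ℝ)/3)) := by
        apply Finset.sum_le_sum
        intro j hj
        exact hratio j (by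
          have := (Finset.mem_Ico.mp hj).1; omega)
    _ = Real.exp (6 * a) * ∑ j ∈ Finset.Ico (k+1) K,
          Real.exp (-6 * ((j:ℝ)+2) ^ ((1:ℝ)/3)) := by rw [Finset.mul_sum]
    _ ≤ Real.exp (6 * a) * ∑ j ∈ Finset.Ico (k+1) K,
          (gmaj ((j:ℝ)+1) - gmaj ((j:ℝ)+2)) := by
        apply mul_le_mul_of_nonneg_left _ (Real.exp_nonneg _)
        apply Finset.sum_le_sum
        intro j _
        have := gmaj_step (y := (j:ℝ)+1) (by positivity)
        have heq : ((j:ℝ)+1) + 1 = (j:ℝ)+2 := by ring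
        rw [heq] at this
        exact this
    _ = Real.exp (6 * a) * (gmaj ((k:ℝ)+2) - gmaj ((K:ℝ)+1)) := by rw [htel K hkK]
    _ ≤ Real.exp (6 * a) * gmaj ((k:ℝ)+2) := by
        apply mul_le_mul_of_nonneg_left _ (Real.exp_nonneg _)
        have := gmaj_nonneg (x := (K:ℝ)+1) (by positivity)
        linarith
    _ = (1/2) * ((k:ℝ) + 2)^((2:ℝ)/3) + (1/6) * ((k:ℝ) + 2)^((1:ℝ)/3) + 1/36 := by
        unfold gmaj
        rw [← ha, ← mul_assoc, ← Real.exp_add]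
        ring_nf
        rw [Real.exp_zero]
        ring
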